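/- Let 0 < ε ≤ 1 and define F(w) = Σ_{ν=0}^∞ w^{4ν} / (4ν+1)^{(1+ε)/2} for w in the open unit disk 𝔻 ⊂ ℂ. Then the series converges and F is holomorphic on 𝔻; F is square-integrable on 𝔻, i.e. ∫_𝔻 |F(w)|² dA(w) = π Σ_{ν=0}^∞ (4ν+1)^{−(2+ε)} < ∞; but its derivative is not square-integrable: ∫_𝔻 |F′(w)|² dA(w) = π Σ_{ν=1}^∞ 4ν (4ν+1)^{−(1+ε)} = ∞. (Hence F belongs to L² of the disk but not to the Sobolev space H¹ of the disk, which shows the sharpness of the embedding of the non-coercive energy space on the Sobolev scale.) -/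

import Mathlib

open MeasureTheory Metric

/-- `F(w) = Σ_{ν=0}^∞ w^{4ν}/(4ν+1)^{(1+ε)/2}`. -/
noncomputable def F (ε : ℝ) (w : ℂ) : ℂ :=
  ∑' ν : ℕ, w ^ (4 * ν) / (((4 * (ν : ℝ) + 1) ^ ((1 + ε) / 2) : ℝ) : ℂ)

open Set Complex
open scoped Real ENNReal



lemma ortho (m n : ℕ) :
    (∫ θ in Set.Ioo (-π) π, Complex.exp (θ * Complex.I) ^ m
      * (starRingEnd ℂ) (Complex.exp (θ * Complex.I)) ^ n)
    = if m = n then ((2 * π : ℝ) : ℂ) else 0 := by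
  have hIoo : ∀ f : ℝ → ℂ, (∫ θ in Set.Ioo (-π) π, f θ) = ∫ θ in (-π)..π, f θ := by
    intro f
    rw [intervalIntegral.integral_of_le (by linarith [Real.pi_pos] : -π ≤ π),
      MeasureTheory.integral_Ioc_eq_integral_Ioo]
  rcases eq_or_ne m n with rfl | hmn
  · simp only [if_pos rfl]
    have hpt : ∀ θ : ℝ, Complex.exp (θ * Complex.I) ^ m
        * (starRingEnd ℂ) (Complex.exp (θ * Complex.I)) ^ m = 1 := by
      intro θ
      rw [← mul_pow, Complex.mul_conj]
      have : Complex.normSq (Complex.exp (θ * Complex.I)) = 1 := by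
        have := Complex.norm_exp_ofReal_mul_I θ
        rw [← Complex.sq_norm, this, one_pow]
      rw [this]
      simp
    rw [show (fun θ : ℝ => Complex.exp (θ * Complex.I) ^ m
        * (starRingEnd ℂ) (Complex.exp (θ * Complex.I)) ^ m) = fun _ : ℝ => (1 : ℂ) from
      funext hpt]
    rw [hIoo]
    rw [intervalIntegral.integral_const]
    have : π - -π = 2 * π := by ring
    rw [this]
    simp [Complex.real_smul]
  · rw [if_neg hmn]
    set c : ℂ := ((m : ℂ) - n) * Complex.I with hc
    have hc0 : c ≠ 0 := by
      apply mul_ne_zero _ Complex.I_ne_zero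
      rw [sub_ne_zero]
      exact_mod_cast fun h => hmn (Nat.cast_injective h)
    have hpt : ∀ θ : ℝ, Complex.exp (θ * Complex.I) ^ m
        * (starRingEnd ℂ) (Complex.exp (θ * Complex.I)) ^ n = Complex.exp (c * θ) := by
      intro θ
      have h1 : (starRingEnd ℂ) (Complex.exp (θ * Complex.I)) = Complex.exp (-(θ * Complex.I)) := by
        rw [← Complex.exp_conj]
        congr 1
        simp [Complex.conj_ofReal]
      rw [h1, ← Complex.exp_nat_mul, ← Complex.exp_nat_mul, ← Complex.exp_add]
      congr 1
      push_cast
      ring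
    calc (∫ θ in Set.Ioo (-π) π, Complex.exp (θ * Complex.I) ^ m
        * (starRingEnd ℂ) (Complex.exp (θ * Complex.I)) ^ n)
        = ∫ θ in (-π)..π, Complex.exp (c * θ) := by
          rw [show (fun θ : ℝ => Complex.exp (θ * Complex.I) ^ m
            * (starRingEnd ℂ) (Complex.exp (θ * Complex.I)) ^ n)
            = fun θ : ℝ => Complex.exp (c * θ) from funext hpt] at *
          exact hIoo _
      _ = 0 := by
          rw [integral_exp_mul_complex hc0]
          have h2 : c * (((-π : ℝ)) : ℂ) = c * ((π : ℝ) : ℂ)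
              + ((-((m:ℤ) - (n:ℤ)) : ℤ) : ℂ) * (2 * (π:ℝ) * Complex.I) := by
            push_cast
            ring
          rw [h2, Complex.exp_add, Complex.exp_int_mul_two_pi_mul_I, mul_one, sub_self, zero_div]



lemma polar_lintegral (g : ℂ → ℝ≥0∞) :
    ∫⁻ w in ball (0 : ℂ) 1, g w =
      ∫⁻ p in Set.Ioo (0:ℝ) 1 ×ˢ Set.Ioo (-π) π,
        ENNReal.ofReal p.1 * g (↑p.1 * Complex.exp (↑p.2 * Complex.I)) := by
  classical
  set G : ℝ × ℝ → ℝ≥0∞ := fun q => g (Complex.measurableEquivRealProd.symm q) with hG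
  have hsymm : ∀ p : ℝ × ℝ, Complex.measurableEquivRealProd.symm (polarCoord.symm p)
      = ↑p.1 * Complex.exp (↑p.2 * Complex.I) := by
    intro p
    have : Complex.measurableEquivRealProd.symm (polarCoord.symm p)
        = Complex.polarCoord.symm p := rfl
    rw [this, Complex.polarCoord_symm_apply, Complex.exp_mul_I]
    push_cast
    ring
  set S : Set (ℝ × ℝ) := {q | q.1 ^ 2 + q.2 ^ 2 < 1} with hS
  set T : Set (ℝ × ℝ) := Set.Ioo (0:ℝ) 1 ×ˢ Set.Ioo (-π) π with hT
  have hTtarget : T ⊆ polarCoord.target := by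
    rw [polarCoord_target]
    exact Set.prod_mono Set.Ioo_subset_Ioi_self (le_refl _)
  -- step 1 : transfer to ℝ × ℝ
  have himage : Complex.measurableEquivRealProd.symm '' S = ball (0:ℂ) 1 := by
    ext w
    simp only [Set.mem_image, mem_ball_zero_iff]
    have habs : ∀ z : ℂ, ‖z‖ ^ 2 = z.re ^ 2 + z.im ^ 2 := by
      intro z
      rw [Complex.sq_norm, Complex.normSq_apply, sq, sq]
    constructor
    · rintro ⟨q, hq, rfl⟩
      have hre : (Complex.measurableEquivRealProd.symm q).re = q.1 := by
        simp [Complex.measurableEquivRealProd]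
      have him : (Complex.measurableEquivRealProd.symm q).im = q.2 := by
        simp [Complex.measurableEquivRealProd]
      have h2 : ‖Complex.measurableEquivRealProd.symm q‖ ^ 2 < 1 := by
        rw [habs, hre, him]; exact hq
      nlinarith [norm_nonneg (Complex.measurableEquivRealProd.symm q)]
    · intro hw
      refine ⟨Complex.measurableEquivRealProd w, ?_, by simp⟩
      have h1 : (Complex.measurableEquivRealProd w).1 = w.re := rfl
      have h2 : (Complex.measurableEquivRealProd w).2 = w.im := rfl
      have h3 : w.re ^ 2 + w.im ^ 2 < 1 := by
        rw [← habs]; nlinarith [norm_nonneg w]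
      simpa [hS, h1, h2] using h3
  have step1 : ∫⁻ w in ball (0:ℂ) 1, g w = ∫⁻ q in S, G q := by
    rw [← himage]
    exact ((MeasurePreserving.symm _ Complex.volume_preserving_equiv_real_prod).setLIntegral_comp_emb
      Complex.measurableEquivRealProd.symm.measurableEmbedding g S).symm
  -- step 2 : a.e. restrict to the polar source
  have step2 : ∫⁻ q in S, G q = ∫⁻ q in S ∩ polarCoord.source, G q := by
    refine setLIntegral_congr ?_
    have h1 : (S ∩ polarCoord.source : Set (ℝ × ℝ)) =ᵐ[volume] (S ∩ Set.univ : Set (ℝ × ℝ)) :=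
      MeasureTheory.ae_eq_set_inter (Filter.EventuallyEq.rfl) polarCoord_source_ae_eq_univ
    simpa [Set.inter_univ] using h1.symm
  -- step 3 : image of T
  have himg : polarCoord.symm '' T = S ∩ polarCoord.source := by
    ext q
    constructor
    · rintro ⟨p, hp, rfl⟩
      refine ⟨?_, polarCoord.map_target (hTtarget hp)⟩
      have h1 : (polarCoord.symm p).1 = p.1 * Real.cos p.2 := rfl
      have h2 : (polarCoord.symm p).2 = p.1 * Real.sin p.2 := rfl
      simp only [hS, Set.mem_setOf_eq, h1, h2]
      have hp1 := hp.1
      simp only [Set.mem_Ioo] at hp1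
      have key : (p.1 * Real.cos p.2) ^ 2 + (p.1 * Real.sin p.2) ^ 2
          = p.1 ^ 2 * ((Real.sin p.2) ^ 2 + (Real.cos p.2) ^ 2) := by ring
      rw [key, Real.sin_sq_add_cos_sq p.2, mul_one]
      nlinarith [hp1.1, hp1.2]
    · rintro ⟨hqS, hqsrc⟩
      refine ⟨polarCoord q, ?_, polarCoord.left_inv hqsrc⟩
      have htar := polarCoord.map_source hqsrc
      rw [polarCoord_target] at htar
      have hfst : (polarCoord q).1 = Real.sqrt (q.1 ^ 2 + q.2 ^ 2) := rfl
      have hlt : (polarCoord q).1 < 1 := by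
        rw [hfst]
        rw [show (1:ℝ) = Real.sqrt 1 by simp]
        exact Real.sqrt_lt_sqrt (by positivity) (by simpa [hS] using hqS)
      exact ⟨⟨htar.1, hlt⟩, htar.2⟩
  -- step 4 : Jacobian change of variables
  have hTmeas : MeasurableSet T := (measurableSet_Ioo.prod measurableSet_Ioo)
  set B : ℝ × ℝ → ℝ × ℝ →L[ℝ] ℝ × ℝ := fun p =>
    LinearMap.toContinuousLinearMap (Matrix.toLin (Module.Basis.finTwoProd ℝ) (Module.Basis.finTwoProd ℝ)
      !![Real.cos p.2, -p.1 * Real.sin p.2; Real.sin p.2, p.1 * Real.cos p.2]) with hB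
  have B_det : ∀ p, (B p).det = p.1 := by
    intro p
    conv_rhs => rw [← one_mul p.1, ← Real.cos_sq_add_sin_sq p.2]
    simp only [hB, neg_mul, LinearMap.det_toContinuousLinearMap, LinearMap.det_toLin,
      Matrix.det_fin_two_of, sub_neg_eq_add]
    ring
  have step4 : ∫⁻ q in S ∩ polarCoord.source, G q
      = ∫⁻ p in T, ENNReal.ofReal |(B p).det| * G (polarCoord.symm p) := by
    rw [← himg]
    exact lintegral_image_eq_lintegral_abs_det_fderiv_mul volume hTmeas
      (fun p _ => (hasFDerivAt_polarCoord_symm p).hasFDerivWithinAt)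
      (polarCoord.symm.injOn.mono hTtarget) G
  rw [step1, step2, step4]
  refine setLIntegral_congr_fun hTmeas ?_
  intro p hp
  beta_reduce
  rw [B_det, abs_of_pos hp.1.1]
  simp only [hG]
  rw [hsymm p]



lemma sq_summable {u : ℕ → ℝ} (h0 : ∀ n, 0 ≤ u n) (h : Summable u) :
    Summable fun n => u n ^ 2 := by
  have hb : ∀ n, u n ^ 2 ≤ (∑' k, u k) * u n := by
    intro n
    have h1 : u n ≤ ∑' k, u k := h.le_tsum n fun j _ => h0 j
    nlinarith [h0 n]
  exact Summable.of_nonneg_of_le (fun n => sq_nonneg _) hb (h.mul_left _)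


lemma angular {b : ℕ → ℂ} {e : ℕ → ℕ} (he : Function.Injective e)
    {g : ℂ → ℂ} (hg : ∀ w ∈ ball (0:ℂ) 1, g w = ∑' n, b n * w ^ e n)
    (hgc : ContinuousOn g (ball (0:ℂ) 1))
    {r : ℝ} (hr0 : 0 ≤ r) (hr1 : r < 1)
    (hu : Summable fun n => ‖b n‖ * r ^ e n) :
    ∫ θ in Set.Ioo (-π) π, ‖g ((r:ℂ) * Complex.exp ((θ:ℂ) * Complex.I))‖ ^ 2
      = 2 * π * ∑' n, ‖b n‖ ^ 2 * r ^ (2 * e n) := by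
  classical
  set u : ℕ → ℝ := fun n => ‖b n‖ * r ^ e n with hu_def
  have hu0 : ∀ n, 0 ≤ u n := fun n => mul_nonneg (norm_nonneg _) (pow_nonneg hr0 _)
  have hrnorm : ∀ θ : ℝ, ‖(r:ℂ) * Complex.exp ((θ:ℂ) * Complex.I)‖ = r := by
    intro θ
    rw [norm_mul, Complex.norm_real, Complex.norm_exp_ofReal_mul_I,
      mul_one, Real.norm_of_nonneg hr0]
  have hmem : ∀ θ : ℝ, (r:ℂ) * Complex.exp ((θ:ℂ) * Complex.I) ∈ ball (0:ℂ) 1 := by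
    intro θ
    rw [mem_ball_zero_iff, hrnorm]
    exact hr1
  set f : ℕ → ℝ → ℂ := fun n θ => b n * ((r:ℂ) * Complex.exp ((θ:ℂ) * Complex.I)) ^ e n with hf_def
  have hnorm : ∀ n θ, ‖f n θ‖ = u n := by
    intro n θ
    rw [hf_def]
    simp only [norm_mul, norm_pow, hrnorm]
    rfl
  have hsumf : ∀ θ : ℝ, Summable fun n => f n θ := by
    intro θ
    apply Summable.of_norm
    simpa only [hnorm] using hu
  -- the complex-valued integrand
  set G : ℝ → ℂ := fun θ => g ((r:ℂ) * Complex.exp ((θ:ℂ) * Complex.I)) with hG_def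
  have hc_inner : Continuous fun θ : ℝ => (r:ℂ) * Complex.exp ((θ:ℂ) * Complex.I) :=
    continuous_const.mul (Complex.continuous_exp.comp
      (Complex.continuous_ofReal.mul continuous_const))
  have hGcont : Continuous G := hgc.comp_continuous hc_inner hmem
  have hGGcont : Continuous fun θ => G θ * (starRingEnd ℂ) (G θ) :=
    hGcont.mul (Complex.continuous_conj.comp hGcont)
  have hInt : IntegrableOn (fun θ => G θ * (starRingEnd ℂ) (G θ)) (Set.Ioo (-π) π) volume :=
    (hGGcont.continuousOn.integrableOn_compact isCompact_Icc).mono_set Set.Ioo_subset_Icc_self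
  -- reduce to the complex integral
  have hsq : ∀ θ : ℝ, ‖G θ‖ ^ 2 = (G θ * (starRingEnd ℂ) (G θ)).re := by
    intro θ
    rw [Complex.mul_conj, Complex.ofReal_re, Complex.normSq_eq_norm_sq]
  have hre : (∫ θ in Set.Ioo (-π) π, ‖G θ‖ ^ 2)
      = (∫ θ in Set.Ioo (-π) π, G θ * (starRingEnd ℂ) (G θ)).re := by
    rw [setIntegral_congr_fun measurableSet_Ioo fun θ _ => hsq θ]
    exact (Complex.reCLM.integral_comp_comm hInt)
  rw [hG_def] at hre
  rw [hre, ← hG_def]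
  -- expand the product of sums
  set ff : ℕ × ℕ → ℝ → ℂ := fun p θ => f p.1 θ * (starRingEnd ℂ) (f p.2 θ) with hff_def
  have hexp : ∀ θ : ℝ, G θ * (starRingEnd ℂ) (G θ) = ∑' p : ℕ × ℕ, ff p θ := by
    intro θ
    have h1 : G θ = ∑' n, f n θ := hg _ (hmem θ)
    have h2 : (starRingEnd ℂ) (∑' n, f n θ) = ∑' n, (starRingEnd ℂ) (f n θ) :=
      ((hsumf θ).hasSum.map (starRingEnd ℂ) Complex.continuous_conj).tsum_eq.symm
    rw [h1, h2]
    apply tsum_mul_tsum_of_summable_norm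
    · simpa only [hnorm] using hu
    · simpa only [RCLike.norm_conj, hnorm] using hu
  have hsum_uu : Summable fun p : ℕ × ℕ => u p.1 * u p.2 := by
    have := summable_mul_of_summable_norm (f := u) (g := u)
      (by simpa only [Real.norm_of_nonneg (hu0 _)] using hu)
      (by simpa only [Real.norm_of_nonneg (hu0 _)] using hu)
    exact this
  have hff_lint : ∀ p : ℕ × ℕ, (∫⁻ θ in Set.Ioo (-π) π, ‖ff p θ‖₊)
      = ENNReal.ofReal (u p.1 * u p.2) * ENNReal.ofReal (2 * π) := by
    intro p
    have hcongr : ∀ θ ∈ Set.Ioo (-π) π, (‖ff p θ‖₊ : ℝ≥0∞) = ENNReal.ofReal (u p.1 * u p.2) := by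
      intro θ _
      rw [← enorm_eq_nnnorm, ← ofReal_norm, hff_def]
      congr 1
      rw [norm_mul, RCLike.norm_conj, hnorm, hnorm]
    rw [setLIntegral_congr_fun measurableSet_Ioo hcongr,
      setLIntegral_const, Real.volume_Ioo]
    congr 1
    ring_nf
  -- swap integral and sum
  have hswap : (∫ θ in Set.Ioo (-π) π, ∑' p : ℕ × ℕ, ff p θ)
      = ∑' p : ℕ × ℕ, ∫ θ in Set.Ioo (-π) π, ff p θ := by
    apply integral_tsum
    · intro p
      apply Continuous.aestronglyMeasurable
      apply Continuous.mul
      · exact continuous_const.mul (hc_inner.pow _)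
      · exact Complex.continuous_conj.comp (continuous_const.mul (hc_inner.pow _))
    · simp only [enorm_eq_nnnorm]
      rw [funext hff_lint]
      rw [ENNReal.tsum_mul_right]
      apply ENNReal.mul_ne_top _ ENNReal.ofReal_ne_top
      rw [← ENNReal.ofReal_tsum_of_nonneg (fun p => mul_nonneg (hu0 _) (hu0 _)) hsum_uu]
      exact ENNReal.ofReal_ne_top
  -- evaluate each integral
  set C : ℕ × ℕ → ℂ := fun p => b p.1 * (starRingEnd ℂ) (b p.2) * ((r:ℂ) ^ (e p.1 + e p.2)) with hC_def
  have hval : ∀ p : ℕ × ℕ, (∫ θ in Set.Ioo (-π) π, ff p θ)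
      = if p.1 = p.2 then C p * ((2 * π : ℝ) : ℂ) else 0 := by
    intro p
    have hpt : ∀ θ : ℝ, ff p θ = C p * (Complex.exp ((θ:ℂ) * Complex.I) ^ e p.1
        * (starRingEnd ℂ) (Complex.exp ((θ:ℂ) * Complex.I)) ^ e p.2) := by
      intro θ
      rw [hff_def, hC_def, hf_def]
      simp only [map_mul, map_pow, Complex.conj_ofReal, mul_pow, pow_add]
      ring
    rw [setIntegral_congr_fun measurableSet_Ioo fun θ _ => hpt θ,
      MeasureTheory.integral_const_mul, ortho (e p.1) (e p.2)]
    simp only [he.eq_iff]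
    split_ifs with h
    · rfl
    · exact mul_zero _
  rw [setIntegral_congr_fun measurableSet_Ioo fun θ _ => hexp θ, hswap, funext hval]
  -- collapse the double sum
  have hC_diag : ∀ m : ℕ, C (m, m) * ((2 * π : ℝ) : ℂ)
      = ((2 * π * (‖b m‖ ^ 2 * r ^ (2 * e m)) : ℝ) : ℂ) := by
    intro m
    rw [hC_def]
    simp only [Complex.mul_conj]
    rw [Complex.normSq_eq_norm_sq]
    push_cast
    rw [two_mul, pow_add]
    ring
  have hsum_ite : Summable fun p : ℕ × ℕ => if p.1 = p.2 then C p * ((2 * π : ℝ) : ℂ) else 0 := by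
    apply Summable.of_norm_bounded (g := fun p : ℕ × ℕ => 2 * π * (u p.1 * u p.2))
      (hsum_uu.mul_left _)
    intro p
    split_ifs with h
    · refine le_of_eq ?_
      rw [norm_mul, hC_def]
      simp only [norm_mul, RCLike.norm_conj, norm_pow, Complex.norm_real,
        Real.norm_of_nonneg hr0, Real.norm_of_nonneg (by positivity : (0:ℝ) ≤ 2 * π)]
      rw [pow_add, hu_def]
      ring
    · simp only [norm_zero]
      exact mul_nonneg (by positivity) (mul_nonneg (hu0 _) (hu0 _))
  rw [Summable.tsum_prod' hsum_ite (fun m => hsum_ite.prod_factor m)]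
  have hinner : ∀ m : ℕ, (∑' n : ℕ, if (m, n).1 = (m, n).2 then C (m, n) * ((2 * π : ℝ) : ℂ) else 0)
      = ((2 * π * (‖b m‖ ^ 2 * r ^ (2 * e m)) : ℝ) : ℂ) := by
    intro m
    have : (∑' n : ℕ, if (m, n).1 = (m, n).2 then C (m, n) * ((2 * π : ℝ) : ℂ) else 0)
        = ∑' n : ℕ, if n = m then C (m, m) * ((2 * π : ℝ) : ℂ) else 0 := by
      apply tsum_congr
      intro n
      rcases eq_or_ne n m with rfl | hnm
      · simp
      · rw [if_neg hnm, if_neg]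
        exact fun hc => hnm hc.symm
    rw [this]
    exact (tsum_ite_eq m (fun _ => C (m, m) * ((2 * π : ℝ) : ℂ))).trans (hC_diag m)
  rw [funext hinner]
  have hsum_real : Summable fun m : ℕ => 2 * π * (‖b m‖ ^ 2 * r ^ (2 * e m)) := by
    have h2 := sq_summable hu0 hu
    apply Summable.mul_left
    apply h2.congr
    intro m
    rw [hu_def]
    simp only [mul_pow, ← pow_mul]
    rw [mul_comm (e m) 2]
  rw [Complex.re_tsum (Complex.summable_ofReal.mpr hsum_real)]
  simp only [Complex.ofReal_re]
  rw [← tsum_mul_left]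




lemma key {b : ℕ → ℂ} {e : ℕ → ℕ} (he : Function.Injective e)
    (hb : ∀ r : ℝ, 0 ≤ r → r < 1 → Summable fun n => ‖b n‖ * r ^ e n)
    {g : ℂ → ℂ} (hg : ∀ w ∈ ball (0:ℂ) 1, g w = ∑' n, b n * w ^ e n)
    (hgc : ContinuousOn g (ball (0:ℂ) 1)) :
    ∫⁻ w in ball (0:ℂ) 1, (‖g w‖₊ : ℝ≥0∞) ^ 2
      = ENNReal.ofReal π * ∑' n, ENNReal.ofReal (‖b n‖ ^ 2 / (e n + 1)) := by
  classical
  have hTmeas : MeasurableSet (Set.Ioo (0:ℝ) 1 ×ˢ Set.Ioo (-π) π) :=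
    measurableSet_Ioo.prod measurableSet_Ioo
  have hmem : ∀ p : ℝ × ℝ, p ∈ Set.Ioo (0:ℝ) 1 ×ˢ Set.Ioo (-π) π →
      (↑p.1 * Complex.exp (↑p.2 * Complex.I)) ∈ ball (0:ℂ) 1 := by
    intro p hp
    rw [mem_ball_zero_iff, norm_mul, Complex.norm_real, 
      Complex.norm_exp_ofReal_mul_I, mul_one, Real.norm_of_nonneg hp.1.1.le]
    exact hp.1.2
  rw [polar_lintegral (fun w => (‖g w‖₊ : ℝ≥0∞) ^ 2)]
  -- replace the integrand by an `ofReal` of a real function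
  have hint_eq : ∀ p ∈ Set.Ioo (0:ℝ) 1 ×ˢ Set.Ioo (-π) π,
      ENNReal.ofReal p.1 * (‖g (↑p.1 * Complex.exp (↑p.2 * Complex.I))‖₊ : ℝ≥0∞) ^ 2
      = ENNReal.ofReal (p.1 * ‖g (↑p.1 * Complex.exp (↑p.2 * Complex.I))‖ ^ 2) := by
    intro p hp
    rw [ENNReal.ofReal_mul hp.1.1.le]
    congr 1
    rw [← enorm_eq_nnnorm, ← ofReal_norm]
    exact (ENNReal.ofReal_pow (norm_nonneg _) 2).symm
  rw [setLIntegral_congr_fun hTmeas hint_eq]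
  -- Tonelli
  have hcont_inner : Continuous fun p : ℝ × ℝ => (↑p.1 * Complex.exp (↑p.2 * Complex.I) : ℂ) :=
    (Complex.continuous_ofReal.comp continuous_fst).mul
      (Complex.continuous_exp.comp ((Complex.continuous_ofReal.comp continuous_snd).mul
        continuous_const))
  have hphi_cont : ContinuousOn
      (fun p : ℝ × ℝ => ENNReal.ofReal (p.1 * ‖g (↑p.1 * Complex.exp (↑p.2 * Complex.I))‖ ^ 2))
      (Set.Ioo (0:ℝ) 1 ×ˢ Set.Ioo (-π) π) := by
    apply ENNReal.continuous_ofReal.comp_continuousOn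
    apply ContinuousOn.mul continuous_fst.continuousOn
    exact ((hgc.comp hcont_inner.continuousOn hmem).norm.pow 2)
  have haem : AEMeasurable
      (fun p : ℝ × ℝ => ENNReal.ofReal (p.1 * ‖g (↑p.1 * Complex.exp (↑p.2 * Complex.I))‖ ^ 2))
      (volume.restrict (Set.Ioo (0:ℝ) 1 ×ˢ Set.Ioo (-π) π)) :=
    hphi_cont.aemeasurable hTmeas
  rw [Measure.volume_eq_prod, ← Measure.prod_restrict, lintegral_prod _ (by
    rw [Measure.prod_restrict, ← Measure.volume_eq_prod]; exact haem)]
  -- angular integral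
  have hang : ∀ r ∈ Set.Ioo (0:ℝ) 1,
      (∫⁻ θ in Set.Ioo (-π) π, ENNReal.ofReal
        (r * ‖g (↑r * Complex.exp (↑θ * Complex.I))‖ ^ 2))
      = ENNReal.ofReal (r * (2 * π * ∑' n, ‖b n‖ ^ 2 * r ^ (2 * e n))) := by
    intro r hr
    have hGc : Continuous fun θ : ℝ => r * ‖g (↑r * Complex.exp (↑θ * Complex.I))‖ ^ 2 := by
      apply continuous_const.mul
      apply Continuous.pow
      apply Continuous.norm
      apply hgc.comp_continuous
      · exact continuous_const.mul (Complex.continuous_exp.comp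
          (Complex.continuous_ofReal.mul continuous_const))
      · intro θ
        rw [mem_ball_zero_iff, norm_mul, Complex.norm_real, 
          Complex.norm_exp_ofReal_mul_I, mul_one, Real.norm_of_nonneg hr.1.le]
        exact hr.2
    have hInt : IntegrableOn (fun θ : ℝ => r * ‖g (↑r * Complex.exp (↑θ * Complex.I))‖ ^ 2)
        (Set.Ioo (-π) π) volume :=
      (hGc.continuousOn.integrableOn_compact isCompact_Icc).mono_set Set.Ioo_subset_Icc_self
    rw [← ofReal_integral_eq_lintegral_ofReal hInt (Filter.Eventually.of_forall fun θ =>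
      mul_nonneg hr.1.le (sq_nonneg _))]
    congr 1
    rw [MeasureTheory.integral_const_mul, angular he hg hgc hr.1.le hr.2 (hb r hr.1.le hr.2)]
  rw [setLIntegral_congr_fun measurableSet_Ioo hang]
  -- radial integral
  have hsq_sum : ∀ r : ℝ, 0 ≤ r → r < 1 → Summable fun n => ‖b n‖ ^ 2 * r ^ (2 * e n) := by
    intro r h0 h1
    have h2 := sq_summable (fun n => mul_nonneg (norm_nonneg _) (pow_nonneg h0 _)) (hb r h0 h1)
    apply h2.congr
    intro n
    rw [mul_pow, ← pow_mul, mul_comm (e n) 2]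
  have hrad : ∀ r ∈ Set.Ioo (0:ℝ) 1,
      ENNReal.ofReal (r * (2 * π * ∑' n, ‖b n‖ ^ 2 * r ^ (2 * e n)))
      = ∑' n, ENNReal.ofReal (2 * π * ‖b n‖ ^ 2 * r ^ (2 * e n + 1)) := by
    intro r hr
    have h1 : r * (2 * π * ∑' n, ‖b n‖ ^ 2 * r ^ (2 * e n))
        = ∑' n, 2 * π * ‖b n‖ ^ 2 * r ^ (2 * e n + 1) := by
      rw [← tsum_mul_left, ← tsum_mul_left]
      apply tsum_congr
      intro n
      rw [pow_succ]
      ring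
    rw [h1, ENNReal.ofReal_tsum_of_nonneg]
    · intro n
      exact mul_nonneg (by positivity) (pow_nonneg hr.1.le _)
    · have := (hsq_sum r hr.1.le hr.2).mul_left (2 * π)
      apply (this.mul_right r).congr
      intro n
      rw [pow_succ]
      ring
  rw [setLIntegral_congr_fun measurableSet_Ioo hrad,
    lintegral_tsum (f := fun n (x : ℝ) => ENNReal.ofReal (2 * π * ‖b n‖ ^ 2 * x ^ (2 * e n + 1)))
      (fun n => Continuous.aemeasurable
        (by exact ENNReal.continuous_ofReal.comp (continuous_const.mul (continuous_pow _))))]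
  -- evaluate each radial integral
  have hone : ∀ n : ℕ, (∫⁻ r in Set.Ioo (0:ℝ) 1, ENNReal.ofReal
      (2 * π * ‖b n‖ ^ 2 * r ^ (2 * e n + 1)))
      = ENNReal.ofReal (2 * π * ‖b n‖ ^ 2 / (2 * (e n) + 2)) := by
    intro n
    have hInt : IntegrableOn (fun r : ℝ => 2 * π * ‖b n‖ ^ 2 * r ^ (2 * e n + 1))
        (Set.Ioo (0:ℝ) 1) volume :=
      ((continuous_const.mul (continuous_pow _)).continuousOn.integrableOn_compact
        isCompact_Icc).mono_set Set.Ioo_subset_Icc_self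
    rw [← ofReal_integral_eq_lintegral_ofReal hInt]
    · congr 1
      rw [← MeasureTheory.integral_Ioc_eq_integral_Ioo,
        ← intervalIntegral.integral_of_le (by norm_num : (0:ℝ) ≤ 1)]
      rw [intervalIntegral.integral_const_mul, integral_pow]
      rw [one_pow, zero_pow (Nat.succ_ne_zero _), sub_zero]
      push_cast
      ring
    · apply (ae_restrict_mem measurableSet_Ioo).mono
      intro r hr
      have := hr.1
      positivity
  rw [funext hone]
  rw [← ENNReal.tsum_mul_left]
  apply tsum_congr
  intro n
  rw [← ENNReal.ofReal_mul Real.pi_pos.le]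
  congr 1
  have hpos : (0:ℝ) < 2 * (e n) + 2 := by positivity
  field_simp



noncomputable def cA (ε : ℝ) (ν : ℕ) : ℝ := (4 * (ν : ℝ) + 1) ^ ((1 + ε) / 2)

noncomputable def cB (ε : ℝ) (ν : ℕ) : ℂ := ((cA ε ν : ℝ) : ℂ)⁻¹

lemma cA_pos (ε : ℝ) (ν : ℕ) : 0 < cA ε ν :=
  Real.rpow_pos_of_pos (by positivity) _

lemma cA_ge_one {ε : ℝ} (hε : 0 < ε) (ν : ℕ) : 1 ≤ cA ε ν :=
  Real.one_le_rpow (by norm_num : (1:ℝ) ≤ 4 * (ν : ℝ) + 1) (by linarith)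

lemma cB_norm {ε : ℝ} (ν : ℕ) : ‖cB ε ν‖ = (cA ε ν)⁻¹ := by
  rw [cB, norm_inv, Complex.norm_real, Real.norm_of_nonneg (cA_pos ε ν).le]

lemma cB_norm_le {ε : ℝ} (hε : 0 < ε) (ν : ℕ) : ‖cB ε ν‖ ≤ 1 := by
  rw [cB_norm]
  exact inv_le_one_of_one_le₀ (cA_ge_one hε ν)

lemma F_eq (ε : ℝ) : F ε = fun w => ∑' ν : ℕ, cB ε ν * w ^ (4 * ν) := by
  funext w
  apply tsum_congr
  intro ν
  rw [cB, cA, div_eq_mul_inv, mul_comm]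

lemma summable_b {ε : ℝ} (hε : 0 < ε) {r : ℝ} (hr0 : 0 ≤ r) (hr1 : r < 1) :
    Summable fun ν => ‖cB ε ν‖ * r ^ (4 * ν) := by
  apply Summable.of_nonneg_of_le (fun ν => by positivity)
    (fun ν => ?_) (summable_geometric_of_lt_one (by positivity : (0:ℝ) ≤ r ^ 4)
      (by
      calc r ^ 4 ≤ r ^ 1 := pow_le_pow_of_le_one hr0 hr1.le (by norm_num)
        _ = r := pow_one r
        _ < 1 := hr1))
  calc ‖cB ε ν‖ * r ^ (4 * ν) ≤ 1 * r ^ (4 * ν) := by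
        apply mul_le_mul_of_nonneg_right (cB_norm_le hε ν) (by positivity)
    _ = (r ^ 4) ^ ν := by rw [one_mul, ← pow_mul]
lemma tluF {ε : ℝ} (hε : 0 < ε) :
    TendstoLocallyUniformlyOn (fun N w => ∑ ν ∈ Finset.range N, cB ε ν * w ^ (4 * ν))
      (fun w => ∑' ν : ℕ, cB ε ν * w ^ (4 * ν)) Filter.atTop (ball (0:ℂ) 1) := by
  rw [tendstoLocallyUniformlyOn_iff_forall_isCompact isOpen_ball]
  intro K hK hKc
  rcases K.eq_empty_or_nonempty with rfl | hne
  · simp [TendstoUniformlyOn]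
  obtain ⟨z, hzK, hmax⟩ := hKc.exists_isMaxOn hne continuous_norm.continuousOn
  have hz1 : ‖z‖ < 1 := by simpa [mem_ball_zero_iff] using hK hzK
  apply tendstoUniformlyOn_tsum_nat (summable_b hε (norm_nonneg z) hz1)
  intro ν w hw
  rw [norm_mul, norm_pow]
  exact mul_le_mul_of_nonneg_left
    (pow_le_pow_left₀ (norm_nonneg w) (hmax hw) _) (norm_nonneg _)

lemma SN_diff {ε : ℝ} (N : ℕ) :
    DifferentiableOn ℂ (fun w => ∑ ν ∈ Finset.range N, cB ε ν * w ^ (4 * ν)) (ball (0:ℂ) 1) :=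
  (Differentiable.fun_sum fun i _ => (differentiable_pow _).const_mul _).differentiableOn

lemma F_diff {ε : ℝ} (hε : 0 < ε) : DifferentiableOn ℂ (F ε) (ball (0:ℂ) 1) := by
  rw [F_eq]
  exact (tluF hε).differentiableOn (Filter.Eventually.of_forall fun N => SN_diff N) isOpen_ball

lemma summable_deriv_terms {ε : ℝ} (hε : 0 < ε) {w : ℂ} (hw : ‖w‖ < 1) :
    Summable fun ν : ℕ => cB ε ν * (((4 * ν : ℕ) : ℂ) * w ^ (4 * ν - 1)) := by
  apply Summable.of_norm_bounded (g := fun ν : ℕ => (4 * (ν:ℝ) + 4) * ‖w‖ ^ ν) ?_ ?_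
  · have h1 : Summable fun ν : ℕ => (ν : ℝ) * ‖w‖ ^ ν := by
      simpa using summable_pow_mul_geometric_of_norm_lt_one (R := ℝ) 1 (r := ‖w‖)
        (by rwa [Real.norm_of_nonneg (norm_nonneg w)])
    have h2 : Summable fun ν : ℕ => ‖w‖ ^ ν := summable_geometric_of_lt_one (norm_nonneg w) hw
    have := (h1.mul_left 4).add (h2.mul_left 4)
    apply this.congr
    intro ν
    ring
  · intro ν
    rw [norm_mul, norm_mul, norm_pow, Complex.norm_natCast]
    rcases Nat.eq_zero_or_pos ν with rfl | hν
    · simp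
    calc ‖cB ε ν‖ * ((4 * ν : ℕ) * ‖w‖ ^ (4 * ν - 1))
        ≤ 1 * ((4 * ν : ℕ) * ‖w‖ ^ ν) := by
          apply mul_le_mul (cB_norm_le hε ν)
          · apply mul_le_mul_of_nonneg_left _ (by positivity)
            exact pow_le_pow_of_le_one (norm_nonneg w) hw.le (by omega)
          · positivity
          · norm_num
      _ ≤ (4 * (ν:ℝ) + 4) * ‖w‖ ^ ν := by
          rw [one_mul]
          apply mul_le_mul_of_nonneg_right _ (by positivity)
          push_cast
          linarith

lemma F_deriv {ε : ℝ} (hε : 0 < ε) {w : ℂ} (hw : w ∈ ball (0:ℂ) 1) :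
    deriv (F ε) w = ∑' ν : ℕ, cB ε ν * (((4 * ν : ℕ) : ℂ) * w ^ (4 * ν - 1)) := by
  have htlu' := (tluF hε).deriv (Filter.Eventually.of_forall fun N => SN_diff N) isOpen_ball
  have h1 : Filter.Tendsto (fun N => deriv (fun w => ∑ ν ∈ Finset.range N, cB ε ν * w ^ (4 * ν)) w)
      Filter.atTop (nhds (deriv (fun w => ∑' ν : ℕ, cB ε ν * w ^ (4 * ν)) w)) :=
    htlu'.tendsto_at hw
  have h2 : ∀ N : ℕ, deriv (fun w => ∑ ν ∈ Finset.range N, cB ε ν * w ^ (4 * ν)) w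
      = ∑ ν ∈ Finset.range N, cB ε ν * (((4 * ν : ℕ) : ℂ) * w ^ (4 * ν - 1)) := by
    intro N
    rw [deriv_fun_sum fun i _ => ((differentiableAt_pow _).const_mul _)]
    apply Finset.sum_congr rfl
    intro i _
    rw [deriv_const_mul _ (differentiableAt_pow _), deriv_pow_field]
  have h3 := (summable_deriv_terms hε (by simpa [mem_ball_zero_iff] using hw)).hasSum.tendsto_sum_nat
  rw [funext h2] at h1
  have := tendsto_nhds_unique h1 h3
  rw [F_eq]
  exact this

lemma F_deriv' {ε : ℝ} (hε : 0 < ε) {w : ℂ} (hw : w ∈ ball (0:ℂ) 1) :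
    deriv (F ε) w = ∑' ν : ℕ, (((4 * (ν+1) : ℕ) : ℂ) * cB ε (ν+1)) * w ^ (4 * ν + 3) := by
  rw [F_deriv hε hw,
    Summable.tsum_eq_zero_add (summable_deriv_terms hε (by simpa [mem_ball_zero_iff] using hw))]
  have h0 : cB ε 0 * (((4 * 0 : ℕ) : ℂ) * w ^ (4 * 0 - 1)) = 0 := by norm_num
  rw [h0, zero_add]
  apply tsum_congr
  intro ν
  have h4 : 4 * (ν + 1) - 1 = 4 * ν + 3 := by omega
  rw [h4]
  ring

lemma F_deriv_diff {ε : ℝ} (hε : 0 < ε) :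
    DifferentiableOn ℂ (deriv (F ε)) (ball (0:ℂ) 1) := by
  have htlu' := (tluF hε).deriv (Filter.Eventually.of_forall fun N => SN_diff N) isOpen_ball
  have : deriv (F ε) = deriv (fun w => ∑' ν : ℕ, cB ε ν * w ^ (4 * ν)) := by rw [F_eq]
  rw [this]
  apply htlu'.differentiableOn _ isOpen_ball
  apply Filter.Eventually.of_forall
  intro N
  have hd : (deriv ∘ fun (N : ℕ) (w : ℂ) => ∑ ν ∈ Finset.range N, cB ε ν * w ^ (4 * ν)) N
      = fun w : ℂ => ∑ ν ∈ Finset.range N, cB ε ν * (((4 * ν : ℕ) : ℂ) * w ^ (4 * ν - 1)) := by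
    funext w
    show deriv (fun w => ∑ ν ∈ Finset.range N, cB ε ν * w ^ (4 * ν)) w = _
    rw [deriv_fun_sum fun i _ => ((differentiableAt_pow _).const_mul _)]
    apply Finset.sum_congr rfl
    intro i _
    rw [deriv_const_mul _ (differentiableAt_pow _), deriv_pow_field]
  rw [hd]
  exact (Differentiable.fun_sum fun i _ =>
    ((differentiable_pow _).const_mul _).const_mul _).differentiableOn




lemma hterm_F (ε : ℝ) (ν : ℕ) :
    ((cA ε ν)⁻¹) ^ 2 / ((4 * ν : ℕ) + 1 : ℝ) = (4 * (ν : ℝ) + 1) ^ (-(2 + ε)) := by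
  have hx : (0:ℝ) < 4 * (ν : ℝ) + 1 := by positivity
  rw [cA]
  rw [← Real.rpow_neg hx.le, ← Real.rpow_natCast ((4 * (ν:ℝ) + 1) ^ (-((1+ε)/2))) 2,
    ← Real.rpow_mul hx.le]
  rw [div_eq_mul_inv]
  have hc : ((4 * ν : ℕ) + 1 : ℝ) = 4 * (ν:ℝ) + 1 := by push_cast; ring
  rw [hc, ← Real.rpow_neg_one (4 * (ν:ℝ) + 1), ← Real.rpow_add hx]
  congr 1
  push_cast
  ring

lemma hterm_D (ε : ℝ) (ν : ℕ) (x : ℝ) (hx : 0 < x) (hxval : x = cA ε (ν + 1)) :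
    ((4 * (ν:ℝ) + 4) * x⁻¹) ^ 2 / ((4 * ν + 3 : ℕ) + 1 : ℝ)
      = (4 * (ν : ℝ) + 4) * (4 * (ν : ℝ) + 5) ^ (-(1 + ε)) := by
  have hy : (0:ℝ) < 4 * ((ν:ℝ) + 1) + 1 := by positivity
  have h1 : x ^ 2 = (4 * (ν:ℝ) + 5) ^ (1 + ε) := by
    have hcast : (4 * (((ν+1):ℕ):ℝ) + 1) = 4 * (ν:ℝ) + 5 := by push_cast; ring
    rw [hxval, cA, hcast, ← Real.rpow_natCast ((4 * (ν:ℝ) + 5) ^ ((1+ε)/2)) 2,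
      ← Real.rpow_mul (by positivity : (0:ℝ) ≤ 4 * (ν:ℝ) + 5)]
    congr 1
    push_cast
    ring
  have h2 : ((4 * (ν:ℝ) + 4) * x⁻¹) ^ 2 = (4 * (ν:ℝ) + 4) ^ 2 * ((4 * (ν:ℝ) + 5) ^ (1 + ε))⁻¹ := by
    rw [mul_pow, ← h1]
    ring
  rw [h2, ← Real.rpow_neg (by positivity)]
  have h3 : ((4 * ν + 3 : ℕ) + 1 : ℝ) = 4 * (ν:ℝ) + 4 := by push_cast; ring
  rw [h3]
  have h4 : (0:ℝ) < 4 * (ν:ℝ) + 4 := by positivity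
  field_simp

lemma summable_part4 {ε : ℝ} (hε : 0 < ε) :
    Summable fun ν : ℕ => (4 * (ν : ℝ) + 1) ^ (-(2 + ε)) := by
  have hp : (-(2 + ε) : ℝ) < -1 := by linarith
  have h1 : Summable fun n : ℕ => ((n : ℝ)) ^ (-(2+ε)) := Real.summable_nat_rpow.mpr hp
  have h2 : Summable fun n : ℕ => (((n+1 : ℕ) : ℝ)) ^ (-(2+ε)) :=
    (summable_nat_add_iff 1).mpr h1
  apply Summable.of_nonneg_of_le (fun n => Real.rpow_nonneg (by positivity) _) (fun n => ?_) h2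
  apply Real.rpow_le_rpow_of_nonpos (by positivity) ?_ (by linarith)
  push_cast
  linarith

lemma tsum_ofReal_eq_top {f : ℕ → ℝ} (h0 : ∀ n, 0 ≤ f n) (h : ¬ Summable f) :
    ∑' n, ENNReal.ofReal (f n) = ⊤ := by
  by_contra hne
  apply h
  have h1 := ENNReal.summable_toReal hne
  apply h1.congr
  intro n
  rw [ENNReal.toReal_ofReal (h0 n)]

lemma not_summable_16 : ¬ Summable fun ν : ℕ => (16 * ((ν:ℝ) + 1))⁻¹ := by
  intro h
  have h2 : Summable fun ν : ℕ => ((ν:ℝ) + 1)⁻¹ := by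
    have := h.mul_left (16:ℝ)
    apply this.congr
    intro n
    rw [mul_inv, ← mul_assoc, mul_inv_cancel₀ (by norm_num : (16:ℝ) ≠ 0), one_mul]
  have h3 : Summable fun ν : ℕ => ((ν:ℕ):ℝ)⁻¹ := by
    apply (summable_nat_add_iff 1).mp
    apply h2.congr
    intro n
    push_cast
    ring
  exact Real.not_summable_natCast_inv h3

lemma lower16 {ε : ℝ} (hε0 : 0 < ε) (hε1 : ε ≤ 1) (ν : ℕ) :
    (16 * ((ν:ℝ) + 1))⁻¹ ≤ (4 * (ν:ℝ) + 4) * (4 * (ν:ℝ) + 5) ^ (-(1 + ε)) := by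
  have h1 : (4 * (ν:ℝ) + 5) ^ (-(1 + ε)) ≥ (8 * ((ν:ℝ) + 1)) ^ (-(1 + ε)) := by
    apply Real.rpow_le_rpow_of_nonpos (by positivity) (by linarith) (by linarith)
  have h2 : (8 * ((ν:ℝ) + 1)) ^ (-(1 + ε)) ≥ (8 * ((ν:ℝ) + 1)) ^ (-(2:ℝ)) :=
    Real.rpow_le_rpow_of_exponent_le (by linarith [Nat.cast_nonneg (α := ℝ) ν]) (by linarith)
  have h3 : (8 * ((ν:ℝ) + 1)) ^ (-(2:ℝ)) = ((8 * ((ν:ℝ) + 1)) ^ (2:ℕ))⁻¹ := by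
    rw [← Real.rpow_natCast (8 * ((ν:ℝ) + 1)) 2, ← Real.rpow_neg (by positivity)]
    norm_num
  have h4 : (4 * (ν:ℝ) + 4) * ((8 * ((ν:ℝ) + 1)) ^ (2:ℕ))⁻¹ = (16 * ((ν:ℝ) + 1))⁻¹ := by
    have hpos : (0:ℝ) < (ν:ℝ) + 1 := by positivity
    field_simp
    ring
  calc (16 * ((ν:ℝ) + 1))⁻¹ = (4 * (ν:ℝ) + 4) * ((8 * ((ν:ℝ) + 1)) ^ (2:ℕ))⁻¹ := h4.symm
    _ = (4 * (ν:ℝ) + 4) * (8 * ((ν:ℝ) + 1)) ^ (-(2:ℝ)) := by rw [h3]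
    _ ≤ (4 * (ν:ℝ) + 4) * (8 * ((ν:ℝ) + 1)) ^ (-(1 + ε)) := by
        apply mul_le_mul_of_nonneg_left h2 (by positivity)
    _ ≤ (4 * (ν:ℝ) + 4) * (4 * (ν:ℝ) + 5) ^ (-(1 + ε)) := by
        apply mul_le_mul_of_nonneg_left h1 (by positivity)

lemma not_summable_D {ε : ℝ} (hε0 : 0 < ε) (hε1 : ε ≤ 1) :
    ¬ Summable fun ν : ℕ => (4 * (ν:ℝ) + 4) * (4 * (ν:ℝ) + 5) ^ (-(1 + ε)) := by
  intro h
  apply not_summable_16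
  exact Summable.of_nonneg_of_le (fun n => by positivity) (fun n => lower16 hε0 hε1 n) h

lemma not_summable_part6 {ε : ℝ} (hε0 : 0 < ε) (hε1 : ε ≤ 1) :
    ¬ Summable fun ν : ℕ => 4 * (ν : ℝ) * (4 * (ν : ℝ) + 1) ^ (-(1 + ε)) := by
  intro h
  apply not_summable_D hε0 hε1
  have h2 := (summable_nat_add_iff 1).mpr h
  apply h2.congr
  intro n
  push_cast
  ring_nf


/-- `F` is holomorphic on the unit disk and square-integrable there (with
`∫_𝔻 |F|² = π Σ (4ν+1)^{−(2+ε)} < ∞`), but its derivative is not square-integrable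
(`∫_𝔻 |F′|² = π Σ 4ν(4ν+1)^{−(1+ε)} = ∞`): `F ∈ L²(𝔻)` but `F ∉ H¹(𝔻)`. -/
theorem stmt19 (ε : ℝ) (hε0 : 0 < ε) (hε1 : ε ≤ 1) :
    (∀ w ∈ ball (0 : ℂ) 1,
      Summable fun ν : ℕ => w ^ (4 * ν) / (((4 * (ν : ℝ) + 1) ^ ((1 + ε) / 2) : ℝ) : ℂ)) ∧
    DifferentiableOn ℂ (F ε) (ball (0 : ℂ) 1) ∧
    IntegrableOn (fun w => ‖F ε w‖ ^ 2) (ball (0 : ℂ) 1) volume ∧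
    (∫ w in ball (0 : ℂ) 1, ‖F ε w‖ ^ 2) =
      Real.pi * ∑' ν : ℕ, (4 * (ν : ℝ) + 1) ^ (-(2 + ε)) ∧
    (Summable fun ν : ℕ => (4 * (ν : ℝ) + 1) ^ (-(2 + ε))) ∧
    (∫⁻ w in ball (0 : ℂ) 1, (‖deriv (F ε) w‖₊ : ENNReal) ^ 2) = ⊤ ∧
    ¬ Summable fun ν : ℕ => 4 * (ν : ℝ) * (4 * (ν : ℝ) + 1) ^ (-(1 + ε)) := by
  -- part 1 : summability of the series on the disk
  have part1 : ∀ w ∈ ball (0 : ℂ) 1,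
      Summable fun ν : ℕ => w ^ (4 * ν) / (((4 * (ν : ℝ) + 1) ^ ((1 + ε) / 2) : ℝ) : ℂ) := by
    intro w hw
    have hw1 : ‖w‖ < 1 := by simpa [mem_ball_zero_iff] using hw
    have h := summable_b hε0 (norm_nonneg w) hw1
    have h2 : Summable fun ν : ℕ => cB ε ν * w ^ (4 * ν) := by
      apply Summable.of_norm
      apply h.congr
      intro ν
      rw [norm_mul, norm_pow]
    apply h2.congr
    intro ν
    rw [cB, cA, mul_comm, ← div_eq_mul_inv]
  -- the ∫⁻ of ‖F‖² over the disk
  have hgF : ∀ w ∈ ball (0:ℂ) 1, F ε w = ∑' ν : ℕ, cB ε ν * w ^ (4 * ν) :=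
    fun w _ => congrFun (F_eq ε) w
  have heF : Function.Injective (fun ν : ℕ => 4 * ν) := fun a b h => by
    have h' : 4 * a = 4 * b := h
    omega
  have hkeyF := key heF (fun r h0 h1 => summable_b hε0 h0 h1) hgF (F_diff hε0).continuousOn
  have hval : (∑' ν : ℕ, ENNReal.ofReal (‖cB ε ν‖ ^ 2 / ((4 * ν : ℕ) + 1 : ℝ)))
      = ENNReal.ofReal (∑' ν : ℕ, (4 * (ν:ℝ) + 1) ^ (-(2 + ε))) := by
    rw [ENNReal.ofReal_tsum_of_nonneg (fun ν => Real.rpow_nonneg (by positivity) _)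
      (summable_part4 hε0)]
    apply tsum_congr
    intro ν
    congr 1
    rw [cB_norm]
    exact hterm_F ε ν
  have hfin : ∫⁻ w in ball (0:ℂ) 1, (‖F ε w‖₊ : ℝ≥0∞) ^ 2
      = ENNReal.ofReal (Real.pi * ∑' ν : ℕ, (4 * (ν:ℝ) + 1) ^ (-(2 + ε))) := by
    rw [hkeyF, hval, ← ENNReal.ofReal_mul Real.pi_pos.le]
  have hmeasF : AEStronglyMeasurable (fun w => ‖F ε w‖ ^ 2)
      (volume.restrict (ball (0:ℂ) 1)) :=
    (((F_diff hε0).continuousOn.norm).pow 2).aestronglyMeasurable measurableSet_ball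
  have part3 : IntegrableOn (fun w => ‖F ε w‖ ^ 2) (ball (0 : ℂ) 1) volume := by
    refine ⟨hmeasF, ?_⟩
    have hcongr : ∀ w : ℂ, (‖‖F ε w‖ ^ 2‖₊ : ℝ≥0∞) = (‖F ε w‖₊ : ℝ≥0∞) ^ 2 := by
      intro w
      rw [nnnorm_pow, nnnorm_norm, ENNReal.coe_pow]
    show (∫⁻ w in ball (0:ℂ) 1, ‖‖F ε w‖ ^ 2‖₊) < ⊤
    rw [lintegral_congr hcongr, hfin]
    exact ENNReal.ofReal_lt_top
  have part4 : (∫ w in ball (0 : ℂ) 1, ‖F ε w‖ ^ 2) =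
      Real.pi * ∑' ν : ℕ, (4 * (ν : ℝ) + 1) ^ (-(2 + ε)) := by
    rw [integral_eq_lintegral_of_nonneg_ae
      (Filter.Eventually.of_forall fun w => sq_nonneg ‖F ε w‖) hmeasF]
    have hcongr : ∀ w : ℂ, ENNReal.ofReal (‖F ε w‖ ^ 2) = (‖F ε w‖₊ : ℝ≥0∞) ^ 2 := by
      intro w
      rw [← enorm_eq_nnnorm, ← ofReal_norm]
      exact ENNReal.ofReal_pow (norm_nonneg _) 2
    rw [lintegral_congr hcongr, hfin, ENNReal.toReal_ofReal]
    exact mul_nonneg Real.pi_pos.le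
      (tsum_nonneg fun ν => Real.rpow_nonneg (by positivity) _)
  -- part 5 : the derivative is not square integrable
  have he2 : Function.Injective (fun ν : ℕ => 4 * ν + 3) := fun a b h => by
    have h' : 4 * a + 3 = 4 * b + 3 := h
    omega
  have hb2 : ∀ r : ℝ, 0 ≤ r → r < 1 →
      Summable fun ν : ℕ => ‖((4 * (ν+1) : ℕ) : ℂ) * cB ε (ν+1)‖ * r ^ (4 * ν + 3) := by
    intro r h0 h1
    have hgeom : Summable fun ν : ℕ => (4 * (ν:ℝ) + 4) * r ^ ν := by
      have ha : Summable fun ν : ℕ => (ν : ℝ) * r ^ ν := by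
        simpa using summable_pow_mul_geometric_of_norm_lt_one (R := ℝ) 1 (r := r)
          (by rwa [Real.norm_of_nonneg h0])
      have hb : Summable fun ν : ℕ => r ^ ν := summable_geometric_of_lt_one h0 h1
      apply ((ha.mul_left 4).add (hb.mul_left 4)).congr
      intro ν
      ring
    apply Summable.of_nonneg_of_le (fun ν => by positivity) (fun ν => ?_) hgeom
    have hn : ‖((4 * (ν+1) : ℕ) : ℂ) * cB ε (ν+1)‖ ≤ 4 * (ν:ℝ) + 4 := by
      rw [norm_mul, Complex.norm_natCast]
      calc ((4 * (ν+1) : ℕ) : ℝ) * ‖cB ε (ν+1)‖ ≤ ((4 * (ν+1) : ℕ) : ℝ) * 1 :=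
            mul_le_mul_of_nonneg_left (cB_norm_le hε0 _) (by positivity)
        _ = 4 * (ν:ℝ) + 4 := by push_cast; ring
    calc ‖((4 * (ν+1) : ℕ) : ℂ) * cB ε (ν+1)‖ * r ^ (4 * ν + 3)
        ≤ (4 * (ν:ℝ) + 4) * r ^ (4 * ν + 3) :=
          mul_le_mul_of_nonneg_right hn (by positivity)
      _ ≤ (4 * (ν:ℝ) + 4) * r ^ ν := by
          apply mul_le_mul_of_nonneg_left _ (by positivity)
          exact pow_le_pow_of_le_one h0 h1.le (by omega)
  have hkeyD := key he2 hb2 (fun w hw => F_deriv' hε0 hw) (F_deriv_diff hε0).continuousOn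
  have part6 : (∫⁻ w in ball (0 : ℂ) 1, (‖deriv (F ε) w‖₊ : ENNReal) ^ 2) = ⊤ := by
    rw [hkeyD]
    have hnb2 : ∀ ν : ℕ, ‖((4 * (ν+1) : ℕ) : ℂ) * cB ε (ν+1)‖
        = (4 * (ν:ℝ) + 4) * (cA ε (ν+1))⁻¹ := by
      intro ν
      rw [norm_mul, Complex.norm_natCast, cB_norm]
      congr 1
      push_cast
      ring
    have hD : (fun ν : ℕ => ENNReal.ofReal
        (‖((4 * (ν+1) : ℕ) : ℂ) * cB ε (ν+1)‖ ^ 2 / ((4 * ν + 3 : ℕ) + 1 : ℝ)))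
        = fun ν : ℕ => ENNReal.ofReal ((4 * (ν:ℝ) + 4) * (4 * (ν:ℝ) + 5) ^ (-(1 + ε))) := by
      funext ν
      rw [hnb2 ν, hterm_D ε ν _ (cA_pos ε (ν+1)) rfl]
    rw [hD, tsum_ofReal_eq_top (fun ν => mul_nonneg (by positivity)
      (Real.rpow_nonneg (by positivity) _)) (not_summable_D hε0 hε1)]
    rw [ENNReal.mul_top]
    exact (ENNReal.ofReal_pos.mpr Real.pi_pos).ne'
  exact ⟨part1, F_diff hε0, part3, part4, summable_part4 hε0, part6,
    not_summable_part6 hε0 hε1⟩
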